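/- arXiv:2406.04559 — 2 statements merged into one kernel-verified Lean document; each statement's English description precedes it below -/
import Mathlib

section
/- Let p and e be primes such that the multiplicative order of p modulo e equals e−1, let k be a positive integer, d = k(e−1), q = p^d, F = GF(q), ω a generator of F*, and C = ⟨ω^e⟩ the subgroup of e-th powers in F*. Let T ≤ Sym(F) be the group of translations x ↦ x + b (b ∈ F), and let G₀ ≤ Sym(F) be generated by x ↦ ω^e·x and x ↦ x^p. If H ≤ ΓL₁(q) is any subgroup whose orbits on F ∖ {0} are exactly C and (F ∖ {0}) ∖ C, then the 2-closure of the group ⟨T, H⟩ satisfies ⟨T, H⟩^(2) ∩ AΓL₁(q) = ⟨T, G₀⟩. -/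
/-- The 2-closure of a permutation group `G ≤ Sym(Ω)`. -/
def twoClosure {Ω : Type*} (G : Subgroup (Equiv.Perm Ω)) : Subgroup (Equiv.Perm Ω) where
  carrier := {σ | ∀ a b : Ω, ∃ g ∈ G, g a = σ a ∧ g b = σ b}
  one_mem' := fun a b => ⟨1, G.one_mem, rfl, rfl⟩
  mul_mem' := by
    intro σ τ hσ hτ a b
    obtain ⟨g, hg, hga, hgb⟩ := hτ a b
    obtain ⟨h, hh, hha, hhb⟩ := hσ (τ a) (τ b)
    refine ⟨h * g, mul_mem hh hg, ?_, ?_⟩ <;>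
      simp [Equiv.Perm.mul_apply, hga, hgb, hha, hhb]
  inv_mem' := by
    intro σ hσ a b
    obtain ⟨g, hg, hga, hgb⟩ := hσ (σ⁻¹ a) (σ⁻¹ b)
    refine ⟨g⁻¹, inv_mem hg, ?_, ?_⟩
    · have := congrArg (⇑g⁻¹) hga
      simpa using this.symm
    · have := congrArg (⇑g⁻¹) hgb
      simpa using this.symm

/-- A rank 3 permutation group: transitive with exactly 3 orbits on Ω × Ω. -/
def IsRank3 {Ω : Type*} (G : Subgroup (Equiv.Perm Ω)) : Prop :=
  MulAction.IsPretransitive G Ω ∧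
    Nat.card (MulAction.orbitRel.Quotient G (Ω × Ω)) = 3


/-- The Frobenius map `x ↦ x^p` as a permutation of a finite field of characteristic `p`. -/
noncomputable def frobPerm (F : Type*) [Field F] [Finite F] (p : ℕ) [Fact p.Prime]
    [CharP F p] : Equiv.Perm F :=
  Equiv.ofBijective (fun x => x ^ p)
    (Finite.injective_iff_bijective.mp (fun a b h => frobenius_inj F p (by simpa [frobenius_def] using h)))

/-- Multiplication by a fixed unit as a permutation of a field. -/
noncomputable def mulPerm {F : Type*} [Field F] (u : Fˣ) : Equiv.Perm F :=
  Equiv.mulLeft₀ (u : F) (Units.ne_zero u)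


/-- The set of translations `x ↦ x + b` of a field `F`, inside `Sym(F)`. -/
def translations (F : Type*) [Field F] : Set (Equiv.Perm F) :=
  Set.range (fun b : F => Equiv.addRight b)

/-- The one-dimensional affine semilinear group `AΓL₁(p^d)` as a set of permutations:
all maps `x ↦ a · x^(p^i) + b` with `a ∈ Fˣ`, `b ∈ F`, `0 ≤ i < d`. -/
def AGammaL1 (p d : ℕ) (F : Type*) [Field F] : Set (Equiv.Perm F) :=
  {σ : Equiv.Perm F | ∃ (a : Fˣ) (b : F) (i : ℕ), i < d ∧
    ∀ x : F, σ x = (a : F) * x ^ p ^ i + b}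

/-- The one-dimensional semilinear group `ΓL₁(p^d)` as a set of permutations:
all maps `x ↦ a · x^(p^i)` with `a ∈ Fˣ`, `0 ≤ i < d`. -/
def GammaL1 (p d : ℕ) (F : Type*) [Field F] : Set (Equiv.Perm F) :=
  {σ : Equiv.Perm F | ∃ (a : Fˣ) (i : ℕ), i < d ∧ ∀ x : F, σ x = (a : F) * x ^ p ^ i}

section Aux

set_option linter.unusedSectionVars false
variable {F : Type*} [Field F] (p : ℕ) [Fact p.Prime] [CharP F p]

lemma inv_eq_pow_order {G : Type*} [Group G] [Finite G] (g : G) :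
    g⁻¹ = g ^ (orderOf g - 1) := by
  have h1 : 0 < orderOf g := orderOf_pos g
  refine inv_eq_of_mul_eq_one_right ?_
  rw [← pow_succ', Nat.sub_add_cancel h1, pow_orderOf_eq_one]

lemma frobPow_inj (j : ℕ) : Function.Injective (fun x : F => x ^ p ^ j) := by
  have h : (fun x : F => x ^ p ^ j) = (frobenius F p)^[j] := by
    funext x; rw [iterate_frobenius]
  rw [h]; exact Function.Injective.iterate (frobenius_inj F p) j

lemma unit_frobPow_inj (j : ℕ) : Function.Injective (fun u : Fˣ => u ^ p ^ j) := by
  intro u v h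
  ext
  exact frobPow_inj p j (by
    simpa [Units.val_pow_eq_pow_val] using congrArg Units.val h)

lemma mem_of_frobPow_mem [Finite F] (C' : Subgroup Fˣ) (j : ℕ) (v : Fˣ)
    (hv : v ^ p ^ j ∈ C') : v ∈ C' := by
  let f : C' → C' := fun u => ⟨(u : Fˣ) ^ p ^ j, pow_mem u.2 _⟩
  have hinj : Function.Injective f := by
    intro a b hab
    have : (a : Fˣ) ^ p ^ j = (b : Fˣ) ^ p ^ j := congrArg Subtype.val hab
    exact Subtype.ext (unit_frobPow_inj p j this)
  obtain ⟨u, hu⟩ := (Finite.injective_iff_surjective.mp hinj) ⟨v ^ p ^ j, hv⟩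
  have h2 : (u : Fˣ) ^ p ^ j = v ^ p ^ j := congrArg Subtype.val hu
  have h3 : (u : Fˣ) = v := unit_frobPow_inj p j h2
  rw [← h3]; exact u.2

lemma pow_p_dmul {d : ℕ} (hcard : ∀ x : F, x ^ p ^ d = x) :
    ∀ (m : ℕ) (x : F), x ^ p ^ (d * m) = x := by
  intro m
  induction m with
  | zero => intro x; simp
  | succ n ih =>
    intro x
    rw [Nat.mul_succ, pow_add, pow_mul, ih, hcard]

lemma pow_p_mod {d : ℕ} (hcard : ∀ x : F, x ^ p ^ d = x) (j : ℕ) (x : F) :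
    x ^ p ^ j = x ^ p ^ (j % d) := by
  conv_lhs => rw [← Nat.div_add_mod j d]
  rw [pow_add, pow_mul, pow_p_dmul p hcard]

lemma mulPerm_apply (u : Fˣ) (x : F) : mulPerm u x = (u : F) * x := rfl

noncomputable def mulPermHom (F : Type*) [Field F] : Fˣ →* Equiv.Perm F where
  toFun := mulPerm
  map_one' := Equiv.ext fun x => by simp [mulPerm_apply]
  map_mul' u v := Equiv.ext fun x => by
    simp [mulPerm_apply, Equiv.Perm.mul_apply, mul_assoc]

lemma frobPerm_pow_apply [Finite F] (j : ℕ) (x : F) :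
    ((frobPerm F p) ^ j) x = x ^ p ^ j := by
  induction j with
  | zero => simp
  | succ n ih =>
    rw [pow_succ', Equiv.Perm.mul_apply]
    show ((frobPerm F p) ^ n) x ^ p = x ^ p ^ (n + 1)
    rw [ih, pow_succ, pow_mul]

lemma GammaL1.map_zero' {d : ℕ} {g : Equiv.Perm F} (hg : g ∈ GammaL1 p d F) :
    g 0 = 0 := by
  obtain ⟨a, i, _, hform⟩ := hg
  rw [hform, zero_pow (pow_ne_zero i (Fact.out : p.Prime).ne_zero), mul_zero]

lemma GammaL1.map_add' {d : ℕ} {g : Equiv.Perm F} (hg : g ∈ GammaL1 p d F) (x y : F) :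
    g (x + y) = g x + g y := by
  obtain ⟨a, i, _, hform⟩ := hg
  rw [hform, hform, hform, add_pow_char_pow, mul_add]

lemma GammaL1.map_sub' {d : ℕ} {g : Equiv.Perm F} (hg : g ∈ GammaL1 p d F) (x y : F) :
    g (y - x) = g y - g x := by
  have := GammaL1.map_add' p hg (y - x) x
  rw [sub_add_cancel] at this
  exact eq_sub_iff_add_eq.mpr this.symm


lemma mem_closure_TH [Finite F] {d : ℕ} (H : Subgroup (Equiv.Perm F))
    (hH : (H : Set (Equiv.Perm F)) ⊆ GammaL1 p d F) {g : Equiv.Perm F}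
    (hg : g ∈ Subgroup.closure (translations F ∪ (H : Set (Equiv.Perm F)))) :
    ∃ h ∈ H, ∃ β : F, ∀ x, g x = h x + β := by
  let M : Submonoid (Equiv.Perm F) :=
  { carrier := {g | ∃ h ∈ H, ∃ β : F, ∀ x, g x = h x + β}
    one_mem' := ⟨1, H.one_mem, 0, fun x => by simp⟩
    mul_mem' := by
      rintro g g' ⟨h, hh, β, hform⟩ ⟨h', hh', β', hform'⟩
      refine ⟨h * h', H.mul_mem hh hh', h β' + β, fun x => ?_⟩
      rw [Equiv.Perm.mul_apply, hform, hform', Equiv.Perm.mul_apply,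
        GammaL1.map_add' p (hH hh), add_assoc] }
  let S : Subgroup (Equiv.Perm F) :=
  { toSubmonoid := M
    inv_mem' := by
      intro g hg
      have h1 : g⁻¹ = g ^ (orderOf g - 1) := inv_eq_pow_order g
      rw [h1]
      exact M.pow_mem hg _ }
  have hle : Subgroup.closure (translations F ∪ (H : Set (Equiv.Perm F))) ≤ S := by
    rw [Subgroup.closure_le]
    rintro σ (⟨b, rfl⟩ | hσ)
    · exact ⟨1, H.one_mem, b, fun x => by simp⟩
    · exact ⟨σ, hσ, 0, fun x => by simp⟩
  exact hle hg

lemma mem_closure_TG0_of_form [Finite F] (u : Fˣ) {σ : Equiv.Perm F} (c : Fˣ)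
    (hc : c ∈ Subgroup.zpowers u) (j : ℕ) (b : F)
    (hform : ∀ x, σ x = (c : F) * x ^ p ^ j + b) :
    σ ∈ Subgroup.closure (translations F ∪ {mulPerm u, frobPerm F p}) := by
  have hσ : σ = Equiv.addRight b * (mulPermHom F c * (frobPerm F p) ^ j) := by
    ext x
    rw [hform, Equiv.Perm.mul_apply, Equiv.Perm.mul_apply]
    show (c : F) * x ^ p ^ j + b = mulPerm c (((frobPerm F p) ^ j) x) + b
    rw [mulPerm_apply, frobPerm_pow_apply]
  rw [hσ]
  have h1 : Equiv.addRight b ∈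
      Subgroup.closure (translations F ∪ {mulPerm u, frobPerm F p}) :=
    Subgroup.subset_closure (Or.inl ⟨b, rfl⟩)
  have hu : mulPerm u ∈
      Subgroup.closure (translations F ∪ {mulPerm u, frobPerm F p}) :=
    Subgroup.subset_closure (Or.inr (Set.mem_insert _ _))
  have h3 : frobPerm F p ∈
      Subgroup.closure (translations F ∪ {mulPerm u, frobPerm F p}) :=
    Subgroup.subset_closure (Or.inr (Set.mem_insert_of_mem _ rfl))
  obtain ⟨m, rfl⟩ := Subgroup.mem_zpowers_iff.mp hc
  have h2 : mulPermHom F (u ^ m) ∈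
      Subgroup.closure (translations F ∪ {mulPerm u, frobPerm F p}) := by
    rw [map_zpow]
    exact Subgroup.zpow_mem _ hu m
  exact mul_mem h1 (mul_mem h2 (pow_mem h3 j))

lemma form_of_mem_closure_TG0 [Finite F] (u : Fˣ) {σ : Equiv.Perm F}
    (hσ : σ ∈ Subgroup.closure (translations F ∪ {mulPerm u, frobPerm F p})) :
    ∃ c ∈ Subgroup.zpowers u, ∃ (j : ℕ) (b : F),
      ∀ x, σ x = (c : F) * x ^ p ^ j + b := by
  let M : Submonoid (Equiv.Perm F) :=
  { carrier := {σ | ∃ c ∈ Subgroup.zpowers u, ∃ (j : ℕ) (b : F),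
      ∀ x, σ x = (c : F) * x ^ p ^ j + b}
    one_mem' := ⟨1, one_mem _, 0, 0, fun x => by simp⟩
    mul_mem' := by
      rintro g g' ⟨c, hc, j, b, hform⟩ ⟨c', hc', j', b', hform'⟩
      refine ⟨c * c' ^ p ^ j, mul_mem hc (pow_mem hc' _), j' + j,
        (c : F) * (b' : F) ^ p ^ j + b, fun x => ?_⟩
      rw [Equiv.Perm.mul_apply, hform, hform', add_pow_char_pow, mul_pow,
        ← pow_mul, ← pow_add]
      push_cast
      ring }
  let S : Subgroup (Equiv.Perm F) :=
  { toSubmonoid := M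
    inv_mem' := by
      intro g hg
      have h1 : g⁻¹ = g ^ (orderOf g - 1) := inv_eq_pow_order g
      rw [h1]
      exact M.pow_mem hg _ }
  have hle : Subgroup.closure (translations F ∪ {mulPerm u, frobPerm F p}) ≤ S := by
    rw [Subgroup.closure_le]
    rintro σ (⟨b, rfl⟩ | hσ | hσ)
    · exact ⟨1, one_mem _, 0, b, fun x => by simp⟩
    · rw [hσ]
      exact ⟨u, Subgroup.mem_zpowers u, 0, 0, fun x => by simp [mulPerm_apply]⟩
    · rw [Set.mem_singleton_iff.mp hσ]
      exact ⟨1, one_mem _, 1, 0, fun x => by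
        show (fun x : F => x ^ p) x = _
        simp⟩
  exact hle hσ

end Aux

/-- Muzychuk; Van Lint–Schrijver graphs. With `p, e, k, d, q, F, ω, C`
as in the Van Lint–Schrijver situation, if `H ≤ ΓL₁(q)` has orbits exactly `C` and
`F \ ({0} ∪ C)` on the nonzero elements, then `⟨T, H⟩⁽²⁾ ∩ AΓL₁(q) = ⟨T, G₀⟩`, where
`T` is the translation group and `G₀ = ⟨x ↦ ω^e x, x ↦ x^p⟩`. -/
theorem vanLintSchrijver_twoClosure
    (p e k d q : ℕ) [Fact p.Prime] (he : e.Prime)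
    (hord : orderOf (p : ZMod e) = e - 1)
    (hk : 0 < k) (hd : d = k * (e - 1)) (hq : q = p ^ d)
    (F : Type*) [Field F] [Fintype F] [CharP F p] (hF : Fintype.card F = q)
    (ω : Fˣ) (hω : ∀ x : Fˣ, x ∈ Subgroup.zpowers ω)
    (C : Set F) (hC : C = {x : F | ∃ c : Fˣ, c ∈ Subgroup.zpowers (ω ^ e) ∧ x = (c : F)})
    (H : Subgroup (Equiv.Perm F)) (hH : (H : Set (Equiv.Perm F)) ⊆ GammaL1 p d F)
    (hHorb1 : MulAction.orbit H ((ω : F) ^ e) = C)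
    (hHorb2 : MulAction.orbit H (ω : F) = {x : F | x ≠ 0} \ C) :
    (twoClosure (Subgroup.closure (translations F ∪ (H : Set (Equiv.Perm F)))) :
        Set (Equiv.Perm F)) ∩ AGammaL1 p d F =
      (Subgroup.closure (translations F ∪ {mulPerm (ω ^ e), frobPerm F p}) :
        Set (Equiv.Perm F)) := by
  have hd0 : 0 < d := by
    have h2e := he.two_le
    rw [hd]; exact Nat.mul_pos hk (by omega)
  have hcard : ∀ x : F, x ^ p ^ d = x := by
    intro x
    have h := FiniteField.pow_card x
    rwa [hF, hq] at h
  set C' : Subgroup Fˣ := Subgroup.zpowers (ω ^ e) with hC'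
  have hCf : ∀ c : Fˣ, c ∈ C' → ∀ z : F, z ∈ C → ∀ j : ℕ,
      (c : F) * z ^ p ^ j ∈ C := by
    intro c hc z hz j
    rw [hC] at hz ⊢
    obtain ⟨w, hw, rfl⟩ := hz
    exact ⟨c * w ^ p ^ j, mul_mem hc (pow_mem hw _), by push_cast; ring⟩
  have hCb : ∀ c : Fˣ, c ∈ C' → ∀ z : F, z ≠ 0 → ∀ j : ℕ,
      (c : F) * z ^ p ^ j ∈ C → z ∈ C := by
    intro c hc z hz j hmem
    rw [hC] at hmem ⊢
    obtain ⟨w, hw, hweq⟩ := hmem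
    set v : Fˣ := Units.mk0 z hz with hv
    have hz' : z = (v : F) := rfl
    have huniteq : c * v ^ p ^ j = w := Units.ext (by push_cast; rw [← hweq, hz'])
    have hvpow : v ^ p ^ j ∈ C' := by
      have h4 : v ^ p ^ j = c⁻¹ * w := by rw [← huniteq]; group
      rw [h4]; exact mul_mem (inv_mem hc) hw
    exact ⟨v, mem_of_frobPow_mem p C' j v hvpow, rfl⟩
  have horbC : ∀ z ∈ C, MulAction.orbit H z = C := by
    intro z hz
    rw [← hHorb1]
    exact MulAction.orbit_eq_iff.mpr (by rw [hHorb1]; exact hz)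
  have horbD : ∀ z : F, z ≠ 0 → z ∉ C →
      MulAction.orbit H z = {x : F | x ≠ 0} \ C := by
    intro z hz hzC
    rw [← hHorb2]
    exact MulAction.orbit_eq_iff.mpr (by rw [hHorb2]; exact ⟨hz, hzC⟩)
  have hkey : ∀ c : Fˣ, c ∈ C' → ∀ (j : ℕ) (z : F), z ≠ 0 →
      ∃ h' : H, (h' : Equiv.Perm F) z = (c : F) * z ^ p ^ j := by
    intro c hc j z hz
    have hne : (c : F) * z ^ p ^ j ≠ 0 :=
      mul_ne_zero c.ne_zero (pow_ne_zero _ hz)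
    by_cases hzC : z ∈ C
    · have hmem : (c : F) * z ^ p ^ j ∈ MulAction.orbit H z := by
        rw [horbC z hzC]; exact hCf c hc z hzC j
      obtain ⟨h', hh'⟩ := MulAction.mem_orbit_iff.mp hmem
      exact ⟨h', hh'⟩
    · have hmem : (c : F) * z ^ p ^ j ∈ MulAction.orbit H z := by
        rw [horbD z hz hzC]
        exact ⟨hne, fun hmem' => hzC (hCb c hc z hz j hmem')⟩
      obtain ⟨h', hh'⟩ := MulAction.mem_orbit_iff.mp hmem
      exact ⟨h', hh'⟩
  ext σ
  constructor
  · rintro ⟨h2cl, a, b, i, hi, hform⟩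
    obtain ⟨g, hg, hg0, hgωe⟩ := h2cl 0 ((ω : F) ^ e)
    obtain ⟨h, hh, β, hgform⟩ := mem_closure_TH p H hH hg
    have hβ : β = b := by
      have h0 := hgform 0
      rw [GammaL1.map_zero' p (hH hh), zero_add] at h0
      rw [← h0, hg0, hform,
        zero_pow (pow_ne_zero i (Fact.out : p.Prime).ne_zero), mul_zero, zero_add]
    have hωe_orbit : h ((ω : F) ^ e) = (a : F) * ((ω : F) ^ e) ^ p ^ i := by
      have h3 := hgform ((ω : F) ^ e)
      rw [hβ, hgωe, hform] at h3
      exact (add_right_cancel h3.symm)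
    have hmem : (a : F) * ((ω : F) ^ e) ^ p ^ i ∈ C := by
      rw [← hHorb1, ← hωe_orbit]
      exact MulAction.mem_orbit _ (⟨h, hh⟩ : H)
    rw [hC] at hmem
    obtain ⟨w, hw, hweq⟩ := hmem
    have huniteq : a * (ω ^ e) ^ p ^ i = w :=
      Units.ext (by push_cast; rw [← hweq])
    have ha : a ∈ C' := by
      have h4 : a = w * ((ω ^ e) ^ p ^ i)⁻¹ := eq_mul_inv_of_mul_eq huniteq
      rw [h4]
      exact mul_mem hw (inv_mem (pow_mem (Subgroup.mem_zpowers _) _))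
    exact mem_closure_TG0_of_form p (ω ^ e) a ha i b hform
  · intro hσ
    obtain ⟨c, hc, j, b, hform⟩ := form_of_mem_closure_TG0 p (ω ^ e) hσ
    refine ⟨fun x y => ?_,
      ⟨c, b, j % d, Nat.mod_lt _ hd0, fun x => by rw [hform, pow_p_mod p hcard]⟩⟩
    by_cases hxy : y - x = 0
    · refine ⟨Equiv.addRight (σ x - x),
        Subgroup.subset_closure (Or.inl ⟨_, rfl⟩), ?_, ?_⟩
      · simp only [Equiv.coe_addRight]; ring
      · have hyx : y = x := sub_eq_zero.mp hxy
        rw [hyx]; simp only [Equiv.coe_addRight]; ring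
    · obtain ⟨⟨h, hh⟩, hhz⟩ := hkey c hc j (y - x) hxy
      refine ⟨Equiv.addRight (σ x - h x) * h,
        mul_mem (Subgroup.subset_closure (Or.inl ⟨_, rfl⟩))
          (Subgroup.subset_closure (Or.inr hh)), ?_, ?_⟩
      · simp only [Equiv.Perm.mul_apply, Equiv.coe_addRight]; ring
      · simp only [Equiv.Perm.mul_apply, Equiv.coe_addRight]
        have h1 : h (y - x) = h y - h x := GammaL1.map_sub' p (hH hh) x y
        have h2 : σ y - σ x = (c : F) * (y - x) ^ p ^ j := by
          rw [hform, hform, sub_pow_char_pow]; ring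
        have h3 : (h : Equiv.Perm F) (y - x) = (c : F) * (y - x) ^ p ^ j := hhz
        rw [h3] at h1
        linear_combination -h1 - h2
end

section
/- Let p ≡ 3 (mod 4) be a prime and k an even positive integer, q = p^k, F = GF(q), ω a generator of F*, and C = ⟨ω⁴⟩ the subgroup of fourth powers in F*. Let T ≤ Sym(F) be the group of translations x ↦ x + b (b ∈ F), and let G₀ ≤ Sym(F) be generated by x ↦ ω⁴·x and x ↦ ω·x^p. If H ≤ ΓL₁(q) is any subgroup whose orbits on F ∖ {0} are exactly C ∪ ωC and ω²C ∪ ω³C, then the 2-closure of the group ⟨T, H⟩ satisfies ⟨T, H⟩^(2) ∩ AΓL₁(q) = ⟨T, G₀⟩. -/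
/-- The coset `ω^j · ⟨ω^4⟩` of the group of fourth powers, as a subset of the field `F`. -/
def quarticCoset {F : Type*} [Field F] (ω : Fˣ) (j : ℕ) : Set F :=
  {x : F | ∃ c : Fˣ, c ∈ Subgroup.zpowers (ω ^ 4) ∧ x = (ω : F) ^ j * (c : F)}


private lemma peisert_zmod4_cases (z : ZMod 4) : z = 0 ∨ z = 1 ∨ z = 2 ∨ z = 3 := by revert z; decide

private lemma peisert_parity_add (i j : ℕ) :
    ((i % 2 : ℕ) : ZMod 4) + ((j % 2 : ℕ) : ZMod 4) * (-1 : ZMod 4) ^ i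
      = (((i + j) % 2 : ℕ) : ZMod 4) := by
  rcases Nat.even_or_odd i with hi | hi <;> rcases Nat.even_or_odd j with hj | hj
  · rw [Nat.even_iff.mp hi, Nat.even_iff.mp hj, Even.neg_one_pow hi,
      Nat.even_iff.mp (hi.add hj)]
    simp
  · rw [Nat.even_iff.mp hi, Nat.odd_iff.mp hj, Even.neg_one_pow hi,
      Nat.odd_iff.mp (hi.add_odd hj)]
    simp
  · rw [Nat.odd_iff.mp hi, Nat.even_iff.mp hj, Odd.neg_one_pow hi,
      Nat.odd_iff.mp (hi.add_even hj)]
    simp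
  · rw [Nat.odd_iff.mp hi, Nat.odd_iff.mp hj, Odd.neg_one_pow hi,
      Nat.even_iff.mp (hi.add_odd hj)]
    decide

private lemma peisert_pin_parity (μ : ZMod 4) (i : ℕ) (h1 : μ = 0 ∨ μ = 1)
    (h2 : μ + (-1 : ZMod 4) ^ i = 0 ∨ μ + (-1 : ZMod 4) ^ i = 1) :
    μ = ((i % 2 : ℕ) : ZMod 4) := by
  rcases Nat.even_or_odd i with hi | hi
  · rw [Even.neg_one_pow hi] at h2
    rw [Nat.even_iff.mp hi]
    rcases h1 with rfl | rfl
    · simp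
    · rcases h2 with h | h <;> exact absurd h (by decide)
  · rw [Odd.neg_one_pow hi] at h2
    rw [Nat.odd_iff.mp hi]
    rcases h1 with rfl | rfl
    · rcases h2 with h | h <;> exact absurd h (by decide)
    · simp

/-- Muzychuk; Peisert graphs. Let `p ≡ 3 (mod 4)` be a prime, `k` even,
`q = p^k`, `F = GF(q)`, `ω` a generator of `Fˣ`, `C = ⟨ω⁴⟩`. If `H ≤ ΓL₁(q)` has orbits
exactly `C ∪ ωC` and `ω²C ∪ ω³C` on the nonzero elements, then
`⟨T, H⟩⁽²⁾ ∩ AΓL₁(q) = ⟨T, G₀⟩`, where `T` is the translation group and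
`G₀ = ⟨x ↦ ω⁴ x, x ↦ ω x^p⟩`. -/
theorem peisert_twoClosure
    (p k d q : ℕ) [Fact p.Prime] (hp4 : p % 4 = 3)
    (hk : 0 < k) (hkeven : Even k) (hd : d = k) (hq : q = p ^ k)
    (F : Type*) [Field F] [Fintype F] [CharP F p] (hF : Fintype.card F = q)
    (ω : Fˣ) (hω : ∀ x : Fˣ, x ∈ Subgroup.zpowers ω)
    (H : Subgroup (Equiv.Perm F)) (hH : (H : Set (Equiv.Perm F)) ⊆ GammaL1 p d F)
    (hHorb1 : MulAction.orbit H ((1 : F)) = quarticCoset ω 0 ∪ quarticCoset ω 1)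
    (hHorb2 : MulAction.orbit H ((ω : F) ^ 2) = quarticCoset ω 2 ∪ quarticCoset ω 3)
    (hHorb : ∀ x : F, x ≠ 0 →
      MulAction.orbit H x = quarticCoset ω 0 ∪ quarticCoset ω 1 ∨
      MulAction.orbit H x = quarticCoset ω 2 ∪ quarticCoset ω 3) :
    (twoClosure (Subgroup.closure (translations F ∪ (H : Set (Equiv.Perm F)))) :
        Set (Equiv.Perm F)) ∩ AGammaL1 p d F =
      (Subgroup.closure (translations F ∪ {mulPerm (ω ^ 4), mulPerm ω * frobPerm F p}) :
        Set (Equiv.Perm F)) := by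
  classical
  have hp : p.Prime := Fact.out
  have hppos : 0 < p := hp.pos
  have hdpos : 0 < d := by omega
  set W : F := ((ω : Fˣ) : F) with hWdef
  have hW0 : W ≠ 0 := Units.ne_zero ω
  -- arithmetic: `4 ∣ q - 1`
  have hq1 : 1 ≤ q := by rw [hq]; exact Nat.one_le_pow _ _ hppos
  have hqmod : q % 4 = 1 := by
    obtain ⟨r, hr⟩ := hkeven
    have h3 : ∀ r : ℕ, 3 ^ (r + r) % 4 = 1 := by
      intro r
      induction r with
      | zero => rfl
      | succ n ih =>
        have he : n + 1 + (n + 1) = (n + n) + 2 := by ring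
        rw [he, pow_add, Nat.mul_mod, ih]
        rfl
    rw [hq, Nat.pow_mod, hp4, hr]
    exact h3 r
  have h4dvd : 4 ∣ q - 1 := by omega
  have hord : orderOf ω = q - 1 := by
    rw [orderOf_eq_card_of_forall_mem_zpowers hω, Nat.card_eq_fintype_card,
      Fintype.card_units, hF]
  have hordZ : (4 : ℤ) ∣ (orderOf ω : ℤ) := by
    rw [hord]; exact_mod_cast h4dvd
  -- discrete logarithm modulo 4
  have logUnique : ∀ m m' : ℤ, (ω : Fˣ) ^ m = ω ^ m' → (m : ZMod 4) = (m' : ZMod 4) := by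
    intro m m' h
    have h1 : ω ^ (m - m') = 1 := by rw [zpow_sub, h]; group
    have h2 : (4 : ℤ) ∣ m - m' := hordZ.trans (orderOf_dvd_iff_zpow_eq_one.mpr h1)
    have h3 : ((m - m' : ℤ) : ZMod 4) = 0 :=
      (ZMod.intCast_zmod_eq_zero_iff_dvd _ 4).mpr (by exact_mod_cast h2)
    push_cast at h3
    exact sub_eq_zero.mp h3
  have hvalz : ∀ m : ℤ, ((ω ^ m : Fˣ) : F) = W ^ m := fun m => Units.val_zpow_eq_zpow_val ω m
  have logUniqueF : ∀ m m' : ℤ, W ^ m = W ^ m' → (m : ZMod 4) = (m' : ZMod 4) := by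
    intro m m' h
    exact logUnique m m' (Units.ext (by rw [hvalz, hvalz]; exact h))
  have hWW : ∀ t : ℤ, ((((ω ^ 4 : Fˣ) ^ t : Fˣ) : F)) = W ^ ((4 : ℤ) * t) := by
    intro t
    rw [Units.val_zpow_eq_zpow_val, Units.val_pow_eq_pow_val]
    rw [show (4 : ℤ) * t = ((4 : ℕ) : ℤ) * t by norm_num, zpow_mul, zpow_natCast]
  have cosetMem : ∀ (m : ℤ) (j : ℕ), (m : ZMod 4) = (j : ZMod 4) → W ^ m ∈ quarticCoset ω j := by
    intro m j h
    have h3 : ((m - (j : ℤ) : ℤ) : ZMod 4) = 0 := by push_cast; rw [h, sub_self]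
    obtain ⟨t, ht⟩ := (ZMod.intCast_zmod_eq_zero_iff_dvd _ 4).mp h3
    refine ⟨(ω ^ 4) ^ t, Subgroup.mem_zpowers_iff.mpr ⟨t, rfl⟩, ?_⟩
    have hm : m = (j : ℤ) + 4 * t := by push_cast at ht; omega
    rw [hm, zpow_add₀ hW0, zpow_natCast, hWW]
  have cosetExists : ∀ (x : F) (j : ℕ), x ∈ quarticCoset ω j →
      ∃ m : ℤ, x = W ^ m ∧ (m : ZMod 4) = (j : ZMod 4) := by
    rintro x j ⟨c, hc, rfl⟩
    obtain ⟨t, rfl⟩ := Subgroup.mem_zpowers_iff.mp hc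
    refine ⟨(j : ℤ) + 4 * t, ?_, ?_⟩
    · rw [zpow_add₀ hW0, zpow_natCast, hWW]
    · push_cast
      rw [show (4 : ZMod 4) = 0 by decide]
      ring
  have memU : ∀ (m : ℤ) (j1 j2 : ℕ),
      (W ^ m ∈ quarticCoset ω j1 ∪ quarticCoset ω j2) ↔
        ((m : ZMod 4) = (j1 : ZMod 4) ∨ (m : ZMod 4) = (j2 : ZMod 4)) := by
    intro m j1 j2
    constructor
    · rintro (h | h)
      · obtain ⟨m', hm', hc⟩ := cosetExists _ _ h
        exact Or.inl ((logUniqueF m m' hm').trans hc)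
      · obtain ⟨m', hm', hc⟩ := cosetExists _ _ h
        exact Or.inr ((logUniqueF m m' hm').trans hc)
    · rintro (h | h)
      · exact Or.inl (cosetMem m j1 h)
      · exact Or.inr (cosetMem m j2 h)
  have hunit : ∀ x : F, x ≠ 0 → ∃ m : ℤ, x = W ^ m := by
    intro x hx
    obtain ⟨t, ht⟩ := Subgroup.mem_zpowers_iff.mp (hω (Units.mk0 x hx))
    have hval := congrArg (Units.val) ht
    simp only [Units.val_mk0] at hval
    exact ⟨t, by rw [← hval]; exact hvalz t⟩
  -- basic facts about `H`
  have Hform : ∀ σ, σ ∈ H → ∃ (e : Fˣ) (i : ℕ), ∀ x : F, σ x = (e : F) * x ^ p ^ i := by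
    intro σ hσ
    obtain ⟨e, i, _, hf⟩ := hH hσ
    exact ⟨e, i, hf⟩
  have Hzero : ∀ σ, σ ∈ H → σ (0 : F) = 0 := by
    intro σ hσ
    obtain ⟨e, i, hf⟩ := Hform σ hσ
    rw [hf, zero_pow (pow_pos hppos i).ne', mul_zero]
  have Hadd : ∀ σ, σ ∈ H → ∀ u v : F, σ (u + v) = σ u + σ v := by
    intro σ hσ u v
    obtain ⟨e, i, hf⟩ := Hform σ hσ
    rw [hf, hf, hf, add_pow_char_pow, mul_add]
  -- the subgroup `P = T ⋊ H`
  have Pmul : ∀ σ τ : Equiv.Perm F, (∃ h ∈ H, ∃ c : F, ∀ x, σ x = h x + c) →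
      (∃ h ∈ H, ∃ c : F, ∀ x, τ x = h x + c) →
      (∃ h ∈ H, ∃ c : F, ∀ x, (σ * τ) x = h x + c) := by
    rintro σ τ ⟨h1, hh1, c1, hf1⟩ ⟨h2, hh2, c2, hf2⟩
    refine ⟨h1 * h2, mul_mem hh1 hh2, h1 c2 + c1, fun x => ?_⟩
    rw [Equiv.Perm.mul_apply, hf1, hf2, Hadd h1 hh1, Equiv.Perm.mul_apply, add_assoc]
  have Pinv : ∀ σ : Equiv.Perm F, (∃ h ∈ H, ∃ c : F, ∀ x, σ x = h x + c) →
      (∃ h ∈ H, ∃ c : F, ∀ x, σ⁻¹ x = h x + c) := by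
    rintro σ ⟨h, hh, c, hf⟩
    refine ⟨h⁻¹, inv_mem hh, -(h⁻¹ c), fun x => ?_⟩
    have hneg : h (-(h⁻¹ c)) = -c := by
      have h0 := Hadd h hh (h⁻¹ c) (-(h⁻¹ c))
      rw [add_neg_cancel, Hzero h hh, (Equiv.Perm.eq_inv_iff_eq (f := h) (x := h⁻¹ c) (y := c)).mp rfl] at h0
      linear_combination -h0
    have hkey : σ (h⁻¹ x + -(h⁻¹ c)) = x := by
      rw [hf, Hadd h hh, (Equiv.Perm.eq_inv_iff_eq (f := h) (x := h⁻¹ x) (y := x)).mp rfl, hneg]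
      ring
    calc σ⁻¹ x = σ⁻¹ (σ (h⁻¹ x + -(h⁻¹ c))) := by rw [hkey]
      _ = h⁻¹ x + -(h⁻¹ c) := Equiv.symm_apply_apply σ _
  let P : Subgroup (Equiv.Perm F) :=
    { carrier := {σ | ∃ h ∈ H, ∃ c : F, ∀ x, σ x = h x + c}
      one_mem' := ⟨1, one_mem H, 0, fun x => by simp⟩
      mul_mem' := fun ha hb => Pmul _ _ ha hb
      inv_mem' := fun ha => Pinv _ ha }
  set G := Subgroup.closure (translations F ∪ (H : Set (Equiv.Perm F))) with hGdef
  have hGP : G ≤ P := by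
    rw [hGdef]
    refine (Subgroup.closure_le _).mpr (Set.union_subset ?_ ?_)
    · rintro σ ⟨b, rfl⟩
      exact ⟨1, one_mem H, b, fun x => by simp⟩
    · intro σ hσ
      exact ⟨σ, hσ, 0, fun x => by simp⟩
  -- orbit membership helpers
  have orbit_of_mem : ∀ (x y : F), y ∈ MulAction.orbit H x → ∃ h ∈ H, h x = y := by
    intro x y hy
    obtain ⟨g, hg⟩ := MulAction.mem_orbit_iff.mp hy
    exact ⟨(g : Equiv.Perm F), g.2, hg⟩
  have mem_orbit_of : ∀ (x y : F), (∃ h ∈ H, h x = y) → y ∈ MulAction.orbit H x := by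
    rintro x y ⟨h, hh, rfl⟩
    exact MulAction.mem_orbit_iff.mpr ⟨⟨h, hh⟩, rfl⟩
  have hc0 : ((0 : ℕ) : ZMod 4) = 0 := by decide
  have hc1 : ((1 : ℕ) : ZMod 4) = 1 := by decide
  have hc2 : ((2 : ℕ) : ZMod 4) = 2 := by decide
  have hc3 : ((3 : ℕ) : ZMod 4) = 3 := by decide
  -- orbits of powers of ω
  have horbLow : ∀ m : ℤ, ((m : ZMod 4) = 0 ∨ (m : ZMod 4) = 1) →
      MulAction.orbit H (W ^ m) = quarticCoset ω 0 ∪ quarticCoset ω 1 := by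
    intro m hm
    rcases hHorb (W ^ m) (zpow_ne_zero m hW0) with h | h
    · exact h
    · exfalso
      have hself : W ^ m ∈ quarticCoset ω 2 ∪ quarticCoset ω 3 :=
        h ▸ MulAction.mem_orbit_self (W ^ m)
      have h23 := (memU m 2 3).mp hself
      rw [hc2, hc3] at h23
      rcases hm with h0 | h0 <;> rcases h23 with h2 | h2 <;> rw [h0] at h2 <;>
        exact absurd h2 (by decide)
  have horbHigh : ∀ m : ℤ, ((m : ZMod 4) = 2 ∨ (m : ZMod 4) = 3) →
      MulAction.orbit H (W ^ m) = quarticCoset ω 2 ∪ quarticCoset ω 3 := by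
    intro m hm
    rcases hHorb (W ^ m) (zpow_ne_zero m hW0) with h | h
    · exfalso
      have hself : W ^ m ∈ quarticCoset ω 0 ∪ quarticCoset ω 1 :=
        h ▸ MulAction.mem_orbit_self (W ^ m)
      have h01 := (memU m 0 1).mp hself
      rw [hc0, hc1] at h01
      rcases hm with h0 | h0 <;> rcases h01 with h2 | h2 <;> rw [h0] at h2 <;>
        exact absurd h2 (by decide)
    · exact h
  have pairOrbit : ∀ m m' : ℤ,
      ((((m : ZMod 4) = 0 ∨ (m : ZMod 4) = 1) ∧ ((m' : ZMod 4) = 0 ∨ (m' : ZMod 4) = 1)) ∨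
        (((m : ZMod 4) = 2 ∨ (m : ZMod 4) = 3) ∧ ((m' : ZMod 4) = 2 ∨ (m' : ZMod 4) = 3))) →
      W ^ m' ∈ MulAction.orbit H (W ^ m) := by
    rintro m m' (⟨hm, hm'⟩ | ⟨hm, hm'⟩)
    · rw [horbLow m hm]
      refine (memU m' 0 1).mpr ?_
      rw [hc0, hc1]
      exact hm'
    · rw [horbHigh m hm]
      refine (memU m' 2 3).mpr ?_
      rw [hc2, hc3]
      exact hm'
  -- key numeric fact: p mod 4
  have hpZ : ((p : ℕ) : ZMod 4) = 3 := by
    rw [← ZMod.natCast_mod, hp4]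
    exact hc3
  have hpZ' : ((p : ℕ) : ZMod 4) = -1 := by rw [hpZ]; decide
  -- existence of suitable elements of H
  have hexists4 : ∀ c : F, ∃ h ∈ H, h c = W ^ (4 : ℕ) * c := by
    intro c
    by_cases hc : c = 0
    · exact ⟨1, one_mem H, by rw [hc, mul_zero]; rfl⟩
    · obtain ⟨m, rfl⟩ := hunit c hc
      have key : W ^ (4 : ℕ) * W ^ m = W ^ ((4 : ℤ) + m) := by
        rw [zpow_add₀ hW0]
        norm_cast
      rw [key]
      apply orbit_of_mem
      apply pairOrbit
      have hcast : (((4 : ℤ) + m : ℤ) : ZMod 4) = (m : ZMod 4) := by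
        push_cast
        rw [show (4 : ZMod 4) = 0 by decide]
        ring
      rcases peisert_zmod4_cases ((m : ZMod 4)) with h | h | h | h
      · exact Or.inl ⟨Or.inl h, Or.inl (by rw [hcast, h])⟩
      · exact Or.inl ⟨Or.inr h, Or.inr (by rw [hcast, h])⟩
      · exact Or.inr ⟨Or.inl h, Or.inl (by rw [hcast, h])⟩
      · exact Or.inr ⟨Or.inr h, Or.inr (by rw [hcast, h])⟩
  have hexistsF : ∀ c : F, ∃ h ∈ H, h c = W * c ^ p := by
    intro c
    by_cases hc : c = 0
    · exact ⟨1, one_mem H, by rw [hc, zero_pow hppos.ne', mul_zero]; rfl⟩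
    · obtain ⟨m, rfl⟩ := hunit c hc
      have key : W * (W ^ m) ^ p = W ^ ((1 : ℤ) + m * (p : ℤ)) := by
        rw [zpow_add₀ hW0, zpow_one, zpow_mul, zpow_natCast]
      rw [key]
      apply orbit_of_mem
      apply pairOrbit
      have hcast : (((1 : ℤ) + m * (p : ℤ) : ℤ) : ZMod 4) = 1 - (m : ZMod 4) := by
        push_cast
        rw [hpZ']
        ring
      rcases peisert_zmod4_cases ((m : ZMod 4)) with h | h | h | h
      · exact Or.inl ⟨Or.inl h, Or.inr (by rw [hcast, h]; decide)⟩
      · exact Or.inl ⟨Or.inr h, Or.inl (by rw [hcast, h]; decide)⟩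
      · exact Or.inr ⟨Or.inl h, Or.inr (by rw [hcast, h]; decide)⟩
      · exact Or.inr ⟨Or.inr h, Or.inl (by rw [hcast, h]; decide)⟩
  -- two-closure helpers
  have memTC : ∀ (K : Subgroup (Equiv.Perm F)) (σ : Equiv.Perm F),
      σ ∈ twoClosure K ↔ ∀ a b : F, ∃ g ∈ K, g a = σ a ∧ g b = σ b := fun _ _ => Iff.rfl
  have hGsub : ∀ σ ∈ G, σ ∈ twoClosure G := fun σ h =>
    (memTC G σ).mpr fun a b => ⟨σ, h, rfl, rfl⟩
  have hg1apply : ∀ x : F, mulPerm (ω ^ 4) x = W ^ (4 : ℕ) * x := by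
    intro x
    show ((ω ^ 4 : Fˣ) : F) * x = W ^ (4 : ℕ) * x
    rw [Units.val_pow_eq_pow_val]
  have hg2apply : ∀ x : F, (mulPerm ω * frobPerm F p) x = W * x ^ p := fun x => rfl
  have gen1TC : mulPerm (ω ^ 4) ∈ twoClosure G := by
    refine (memTC G _).mpr fun x y => ?_
    obtain ⟨h, hh, hhe⟩ := hexists4 (y + -x)
    refine ⟨Equiv.addRight (W ^ (4 : ℕ) * x) * h * Equiv.addRight (-x), ?_, ?_, ?_⟩
    · exact mul_mem (mul_mem (Subgroup.subset_closure (Or.inl ⟨_, rfl⟩))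
        (Subgroup.subset_closure (Or.inr hh))) (Subgroup.subset_closure (Or.inl ⟨_, rfl⟩))
    · show h (x + -x) + W ^ (4 : ℕ) * x = mulPerm (ω ^ 4) x
      rw [add_neg_cancel, Hzero h hh, zero_add, hg1apply]
    · show h (y + -x) + W ^ (4 : ℕ) * x = mulPerm (ω ^ 4) y
      rw [hhe, hg1apply]
      ring
  have gen2TC : mulPerm ω * frobPerm F p ∈ twoClosure G := by
    refine (memTC G _).mpr fun x y => ?_
    obtain ⟨h, hh, hhe⟩ := hexistsF (y + -x)
    refine ⟨Equiv.addRight (W * x ^ p) * h * Equiv.addRight (-x), ?_, ?_, ?_⟩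
    · exact mul_mem (mul_mem (Subgroup.subset_closure (Or.inl ⟨_, rfl⟩))
        (Subgroup.subset_closure (Or.inr hh))) (Subgroup.subset_closure (Or.inl ⟨_, rfl⟩))
    · show h (x + -x) + W * x ^ p = (mulPerm ω * frobPerm F p) x
      rw [add_neg_cancel, Hzero h hh, zero_add, hg2apply]
    · show h (y + -x) + W * x ^ p = (mulPerm ω * frobPerm F p) y
      rw [hhe, hg2apply, ← sub_eq_add_neg, sub_pow_char]
      ring
  -- the subgroup S of "good" affine semilinear maps
  set Sset : Set (Equiv.Perm F) :=
    {σ | ∃ (m : ℤ) (i : ℕ) (b : F), (∀ x : F, σ x = W ^ m * x ^ p ^ i + b) ∧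
      (m : ZMod 4) = ((i % 2 : ℕ) : ZMod 4)} with hSdef
  have hSone : (1 : Equiv.Perm F) ∈ Sset := ⟨0, 0, 0, fun x => by simp, by simp⟩
  have hSmul : ∀ σ τ : Equiv.Perm F, σ ∈ Sset → τ ∈ Sset → σ * τ ∈ Sset := by
    rintro σ τ ⟨m, i, b, hf, hc⟩ ⟨m', i', b', hf', hc'⟩
    refine ⟨m + m' * ((p ^ i : ℕ) : ℤ), i + i', W ^ m * b' ^ p ^ i + b, fun x => ?_, ?_⟩
    · rw [Equiv.Perm.mul_apply, hf, hf', add_pow_char_pow, mul_pow,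
        ← zpow_natCast (W ^ m') (p ^ i), ← zpow_mul, ← pow_mul, ← pow_add,
        zpow_add₀ hW0, Nat.add_comm i' i]
      ring
    · push_cast
      rw [hc, hc', hpZ']
      exact peisert_parity_add i i'
  have hSpow : ∀ (n : ℕ) (σ : Equiv.Perm F), σ ∈ Sset → σ ^ n ∈ Sset := by
    intro n
    induction n with
    | zero => intro σ _; rw [pow_zero]; exact hSone
    | succ n ih => intro σ h; rw [pow_succ]; exact hSmul _ _ (ih σ h) h
  have hSinv : ∀ σ : Equiv.Perm F, σ ∈ Sset → σ⁻¹ ∈ Sset := by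
    intro σ h
    have hpos : 0 < orderOf σ := orderOf_pos σ
    have h1 : σ * σ ^ (orderOf σ - 1) = 1 := by
      rw [← pow_succ', Nat.sub_add_cancel hpos]
      exact pow_orderOf_eq_one σ
    rw [inv_eq_of_mul_eq_one_right h1]
    exact hSpow _ σ h
  let Ssub : Subgroup (Equiv.Perm F) :=
    { carrier := Sset
      one_mem' := hSone
      mul_mem' := fun ha hb => hSmul _ _ ha hb
      inv_mem' := fun ha => hSinv _ ha }
  have hT_S : translations F ⊆ Sset := by
    rintro σ ⟨b, rfl⟩
    exact ⟨0, 0, b, fun x => by simp, by simp⟩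
  have h4nat : W ^ ((4 : ℤ)) = W ^ (4 : ℕ) := by norm_cast
  have hg1S : mulPerm (ω ^ 4) ∈ Sset := by
    refine ⟨4, 0, 0, fun x => ?_, by decide⟩
    rw [hg1apply, h4nat]
    simp
  have hg2S : mulPerm ω * frobPerm F p ∈ Sset := by
    refine ⟨1, 1, 0, fun x => ?_, by decide⟩
    rw [hg2apply, zpow_one, pow_one]
    simp
  have hgenS : translations F ∪ {mulPerm (ω ^ 4), mulPerm ω * frobPerm F p} ⊆ Sset := by
    refine Set.union_subset hT_S ?_
    intro σ hσ
    rcases hσ with rfl | hσ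
    · exact hg1S
    · rw [Set.mem_singleton_iff] at hσ
      subst hσ
      exact hg2S
  have hRHSle : Subgroup.closure (translations F ∪ {mulPerm (ω ^ 4), mulPerm ω * frobPerm F p})
      ≤ Ssub := (Subgroup.closure_le _).mpr hgenS
  -- decomposition: Sset is contained in the closure
  have hsum4 : ∀ i : ℕ, (((∑ l ∈ Finset.range i, p ^ l : ℕ)) : ZMod 4)
      = ((i % 2 : ℕ) : ZMod 4) := by
    intro i
    induction i with
    | zero => simp
    | succ n ih =>
      rw [Finset.sum_range_succ]
      push_cast
      push_cast at ih
      rw [ih, hpZ']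
      rcases Nat.even_or_odd n with h | h
      · have hn2 := Nat.even_iff.mp h
        rw [hn2, Even.neg_one_pow h, show (n + 1) % 2 = 1 by omega]
        simp
      · have hn2 := Nat.odd_iff.mp h
        rw [hn2, Odd.neg_one_pow h, show (n + 1) % 2 = 0 by omega]
        simp
  have hg2pow : ∀ (i : ℕ) (x : F),
      ((mulPerm ω * frobPerm F p) ^ i) x = W ^ (∑ l ∈ Finset.range i, p ^ l) * x ^ (p ^ i) := by
    intro i
    induction i with
    | zero => intro x; simp
    | succ n ih =>
      intro x
      rw [pow_succ, Equiv.Perm.mul_apply, hg2apply, ih (W * x ^ p), Finset.sum_range_succ,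
        pow_add W, mul_pow, ← pow_mul, pow_succ p]
      ring
  have hmulhom : ∀ a b : Fˣ, mulPerm (a * b) = mulPerm a * mulPerm b := by
    intro a b
    ext x
    show ((a * b : Fˣ) : F) * x = (a : F) * ((b : F) * x)
    rw [Units.val_mul, mul_assoc]
  have hS_sub : ∀ σ ∈ Sset,
      σ ∈ Subgroup.closure (translations F ∪ {mulPerm (ω ^ 4), mulPerm ω * frobPerm F p}) := by
    rintro σ ⟨m, i, b, hf, hc⟩
    set s : ℕ := ∑ l ∈ Finset.range i, p ^ l with hs
    have hms : ((m - (s : ℤ) : ℤ) : ZMod 4) = 0 := by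
      rw [Int.cast_sub, hc, Int.cast_natCast, hsum4 i, sub_self]
    obtain ⟨t, ht⟩ := (ZMod.intCast_zmod_eq_zero_iff_dvd _ 4).mp hms
    have hm : m = (s : ℤ) + 4 * t := by push_cast at ht; omega
    let M : Fˣ →* Equiv.Perm F := MonoidHom.mk' (fun u => mulPerm u) hmulhom
    have hmem4t : mulPerm ((ω ^ 4) ^ t)
        ∈ Subgroup.closure (translations F ∪ {mulPerm (ω ^ 4), mulPerm ω * frobPerm F p}) := by
      have heq : mulPerm ((ω ^ 4) ^ t) = (mulPerm (ω ^ 4)) ^ t := map_zpow M (ω ^ 4) t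
      rw [heq]
      have h1 : mulPerm (ω ^ 4)
          ∈ Subgroup.closure (translations F ∪ {mulPerm (ω ^ 4), mulPerm ω * frobPerm F p}) :=
        Subgroup.subset_closure (Or.inr (Set.mem_insert _ _))
      exact Subgroup.zpow_mem _ h1 t
    have hfinal : σ = Equiv.addRight b * mulPerm ((ω ^ 4) ^ t) * (mulPerm ω * frobPerm F p) ^ i := by
      apply Equiv.ext
      intro x
      rw [hf x]
      show W ^ m * x ^ p ^ i + b
        = ((ω ^ 4 : Fˣ) ^ t : Fˣ) * (((mulPerm ω * frobPerm F p) ^ i) x) + b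
      rw [hg2pow i x, hWW, ← hs, hm, zpow_add₀ hW0, zpow_natCast]
      ring
    rw [hfinal]
    refine mul_mem (mul_mem (Subgroup.subset_closure (Or.inl ⟨b, rfl⟩)) hmem4t) ?_
    have h2 : mulPerm ω * frobPerm F p
        ∈ Subgroup.closure (translations F ∪ {mulPerm (ω ^ 4), mulPerm ω * frobPerm F p}) :=
      Subgroup.subset_closure (Or.inr (Set.mem_insert_of_mem _ rfl))
    exact Subgroup.pow_mem _ h2 i
  -- Sset is contained in AΓL₁
  have hxq : ∀ x : F, x ^ (p ^ d) = x := by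
    intro x
    have hcd : Fintype.card F = p ^ d := by rw [hF, hq, hd]
    have := FiniteField.pow_card x
    rwa [hcd] at this
  have hiter : ∀ (t : ℕ) (x : F), x ^ (p ^ (d * t)) = x := by
    intro t
    induction t with
    | zero => intro x; simp
    | succ n ih =>
      intro x
      rw [Nat.mul_succ, pow_add, pow_mul, hxq (x ^ p ^ (d * n)), ih]
  have hreduce : ∀ (i : ℕ) (x : F), x ^ (p ^ i) = x ^ (p ^ (i % d)) := by
    intro i x
    conv_lhs => rw [← Nat.div_add_mod i d]
    rw [pow_add, pow_mul, hiter (i / d) x]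
  have hS_AGL : ∀ σ ∈ Sset, σ ∈ AGammaL1 p d F := by
    rintro σ ⟨m, i, b, hf, _⟩
    refine ⟨Units.mk0 (W ^ m) (zpow_ne_zero m hW0), b, i % d, Nat.mod_lt i hdpos, fun x => ?_⟩
    rw [hf x, hreduce i x]
    rfl
  -- the main inclusion
  have hMain : ∀ σ : Equiv.Perm F, σ ∈ twoClosure G → σ ∈ AGammaL1 p d F → σ ∈ Sset := by
    rintro σ hTC ⟨a, b, i, hid, hform⟩
    set σ' : Equiv.Perm F := Equiv.addRight (-b) * σ with hσ'def
    have hf' : ∀ x : F, σ' x = (a : F) * x ^ p ^ i := by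
      intro x
      show σ x + -b = (a : F) * x ^ p ^ i
      rw [hform x]
      ring
    have hTC' : σ' ∈ twoClosure G :=
      mul_mem (hGsub _ (Subgroup.subset_closure (Or.inl ⟨-b, rfl⟩))) hTC
    have h0' : σ' 0 = 0 := by
      rw [hf', zero_pow (pow_pos hppos i).ne', mul_zero]
    have hfix : ∀ x : F, σ' x ∈ MulAction.orbit H x := by
      intro x
      obtain ⟨g, hgG, hg0, hgx⟩ := (memTC G σ').mp hTC' 0 x
      obtain ⟨h, hh, c, hgf⟩ := hGP hgG
      have hc0 : c = 0 := by
        have h1 := hgf 0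
        rw [hg0, h0', Hzero h hh, zero_add] at h1
        exact h1.symm
      rw [← hgx, hgf x, hc0, add_zero]
      exact mem_orbit_of x _ ⟨h, hh, rfl⟩
    have h1 : (a : F) ∈ quarticCoset ω 0 ∪ quarticCoset ω 1 := by
      have hx := hfix 1
      rw [hHorb1] at hx
      have : σ' 1 = (a : F) := by rw [hf']; simp
      rwa [this] at hx
    obtain ⟨m, ham, hm01⟩ : ∃ m : ℤ, (a : F) = W ^ m ∧ ((m : ZMod 4) = 0 ∨ (m : ZMod 4) = 1) := by
      rcases h1 with h | h
      · obtain ⟨m, hh1, hh2⟩ := cosetExists _ _ h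
        rw [hc0] at hh2
        exact ⟨m, hh1, Or.inl hh2⟩
      · obtain ⟨m, hh1, hh2⟩ := cosetExists _ _ h
        rw [hc1] at hh2
        exact ⟨m, hh1, Or.inr hh2⟩
    have horbW : MulAction.orbit H W = quarticCoset ω 0 ∪ quarticCoset ω 1 := by
      have h := horbLow 1 (Or.inr (by norm_num))
      rwa [zpow_one] at h
    have hω' : σ' W ∈ quarticCoset ω 0 ∪ quarticCoset ω 1 := by
      have hx := hfix W
      rwa [horbW] at hx
    have hval : σ' W = W ^ (m + ((p ^ i : ℕ) : ℤ)) := by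
      rw [hf' W, ham, zpow_add₀ hW0, zpow_natCast]
    have hcls := (memU (m + ((p ^ i : ℕ) : ℤ)) 0 1).mp (hval ▸ hω')
    rw [hc0, hc1] at hcls
    have hcast : ((m + ((p ^ i : ℕ) : ℤ) : ℤ) : ZMod 4) = (m : ZMod 4) + (-1 : ZMod 4) ^ i := by
      push_cast
      rw [hpZ']
    have hfinalC : (m : ZMod 4) = ((i % 2 : ℕ) : ZMod 4) := by
      apply peisert_pin_parity _ _ hm01
      rw [← hcast]
      exact hcls
    exact ⟨m, i, b, fun x => by rw [hform x, ham], hfinalC⟩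
  -- conclusion
  apply Set.Subset.antisymm
  · rintro σ ⟨hσ1, hσ2⟩
    exact hS_sub σ (hMain σ hσ1 hσ2)
  · intro σ hσ
    have hσS : σ ∈ Sset := hRHSle hσ
    refine ⟨?_, hS_AGL σ hσS⟩
    have hle : Subgroup.closure (translations F ∪ {mulPerm (ω ^ 4), mulPerm ω * frobPerm F p})
        ≤ twoClosure G := by
      refine (Subgroup.closure_le _).mpr (Set.union_subset ?_ ?_)
      · intro τ hτ
        exact hGsub τ (Subgroup.subset_closure (Or.inl hτ))
      · intro τ hτ
        rcases hτ with rfl | hτ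
        · exact gen1TC
        · rw [Set.mem_singleton_iff] at hτ
          subst hτ
          exact gen2TC
    exact hle hσ
end
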